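/- Let k be a field, H a bialgebra over k with comultiplication Δ (Sweedler notation Δ(h) = Σ h₍₁₎ ⊗ h₍₂₎) and counit ε, and let J = Σ J⁽¹⁾ ⊗ J⁽²⁾ and L be invertible elements of H ⊗ H, each satisfying the 2-cocycle identity ((id ⊗ Δ)(W)) · (1 ⊗ W) = ((Δ ⊗ id)(W)) · (W ⊗ 1) (for W = J and W = L) and normalized, i.e., (ε ⊗ id)(W) = 1 = (id ⊗ ε)(W). Write L⁻¹ = Σ L⁽⁻¹⁾ ⊗ L⁽⁻²⁾. Then the bilinear product on the dual space H* = Hom_k(H, k) defined by (f · g)(h) = Σ g(L⁽⁻¹⁾ h₍₁₎ J⁽¹⁾) f(L⁽⁻²⁾ h₍₂₎ J⁽²⁾) is associative and has ε as a two-sided unit, so it makes H* an associative unital k-algebra. -/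

import Mathlib

set_option maxHeartbeats 800000


/-!
Statement 14: Let `k` be a field, `H` a bialgebra over `k`, and `J`, `L` invertible
normalized 2-cocycles in `H ⊗ H`.  Then the bilinear product on `H* = Hom_k(H, k)` given by
`(f · g)(h) = Σ g(L⁽⁻¹⁾ h₍₁₎ J⁽¹⁾) f(L⁽⁻²⁾ h₍₂₎ J⁽²⁾)`, i.e.
`f · g = (g ⊗ f) ∘ (L⁻¹ · Δ(-) · J)` followed by multiplication in `k`,
is associative with two-sided unit `ε`, so it makes `H*` an associative unital `k`-algebra.
-/

open TensorProduct

universe u v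

variable (k : Type u) (H : Type v) [Field k] [Ring H] [Bialgebra k H]

/-- The Hopf 2-cocycle identity
`((id ⊗ Δ)(W)) · (1 ⊗ W) = ((Δ ⊗ id)(W)) · (W ⊗ 1)` in `H ⊗ H ⊗ H`. -/
def IsTwoCocycle (W : H ⊗[k] H) : Prop :=
  (LinearMap.lTensor H (Coalgebra.comul (R := k) (A := H))) W * ((1 : H) ⊗ₜ[k] W) =
    (TensorProduct.assoc k H H H)
        ((LinearMap.rTensor H (Coalgebra.comul (R := k) (A := H))) W) *
      (TensorProduct.assoc k H H H) (W ⊗ₜ[k] (1 : H))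

/-- Normalization of an element `W` of `H ⊗ H`: `(ε ⊗ id)(W) = 1 = (id ⊗ ε)(W)`. -/
def IsNormalized (W : H ⊗[k] H) : Prop :=
  (TensorProduct.lid k H) ((LinearMap.rTensor H (Coalgebra.counit (R := k) (A := H))) W) = 1 ∧
  (TensorProduct.rid k H) ((LinearMap.lTensor H (Coalgebra.counit (R := k) (A := H))) W) = 1

/-- The twisted comultiplication `ᴸΔᴶ : H →ₗ[k] H ⊗ H`, `h ↦ L⁻¹ · Δ(h) · J`; in Sweedler
notation `ᴸΔᴶ(h) = Σ L⁽⁻¹⁾ h₍₁₎ J⁽¹⁾ ⊗ L⁽⁻²⁾ h₍₂₎ J⁽²⁾`. -/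
noncomputable def twistedComul (J L : H ⊗[k] H) [Invertible L] : H →ₗ[k] H ⊗[k] H :=
  (LinearMap.mulRight k J) ∘ₗ (LinearMap.mulLeft k (⅟L)) ∘ₗ
    (Coalgebra.comul (R := k) (A := H))

/-- The twisted product on the dual space `H* = Hom_k(H, k)`:
`(f · g)(h) = Σ g(L⁽⁻¹⁾ h₍₁₎ J⁽¹⁾) · f(L⁽⁻²⁾ h₍₂₎ J⁽²⁾)`. -/
noncomputable def twistedDualMul (J L : H ⊗[k] H) [Invertible L]
    (f g : Module.Dual k H) : Module.Dual k H :=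
  (TensorProduct.lid k k).toLinearMap ∘ₗ (TensorProduct.map g f) ∘ₗ twistedComul k H J L

namespace Stmt14Aux

/-- `Δ ⊗ id` as an algebra hom. -/
noncomputable def D1 : H ⊗[k] H →ₐ[k] (H ⊗[k] H) ⊗[k] H :=
  Algebra.TensorProduct.map (Bialgebra.comulAlgHom k H) (AlgHom.id k H)

/-- `id ⊗ Δ` as an algebra hom. -/
noncomputable def D2 : H ⊗[k] H →ₐ[k] H ⊗[k] (H ⊗[k] H) :=
  Algebra.TensorProduct.map (AlgHom.id k H) (Bialgebra.comulAlgHom k H)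

/-- `ε ⊗ id` as an algebra hom. -/
noncomputable def E1 : H ⊗[k] H →ₐ[k] H :=
  (Algebra.TensorProduct.lid k H).toAlgHom.comp
    (Algebra.TensorProduct.map (Bialgebra.counitAlgHom k H) (AlgHom.id k H))

/-- `id ⊗ ε` as an algebra hom. -/
noncomputable def E2 : H ⊗[k] H →ₐ[k] H :=
  (Algebra.TensorProduct.rid k k H).toAlgHom.comp
    (Algebra.TensorProduct.map (AlgHom.id k H) (Bialgebra.counitAlgHom k H))

lemma D1_apply (u : H ⊗[k] H) :
    D1 k H u = LinearMap.rTensor H (Coalgebra.comul (R := k)) u := rfl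

lemma D2_apply (u : H ⊗[k] H) :
    D2 k H u = LinearMap.lTensor H (Coalgebra.comul (R := k)) u := rfl

lemma assoc_apply' (v : (H ⊗[k] H) ⊗[k] H) :
    Algebra.TensorProduct.assoc k k k H H H v = TensorProduct.assoc k H H H v := rfl

lemma E1_apply (u : H ⊗[k] H) :
    E1 k H u = TensorProduct.lid k H
      (LinearMap.rTensor H (Coalgebra.counit (R := k) (A := H)) u) := by
  induction u using TensorProduct.induction_on with
  | zero => simp
  | tmul a b => simp [E1]
  | add x y hx hy => simp [map_add, hx, hy]

lemma E2_apply (u : H ⊗[k] H) :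
    E2 k H u = TensorProduct.rid k H
      (LinearMap.lTensor H (Coalgebra.counit (R := k) (A := H)) u) := by
  induction u using TensorProduct.induction_on with
  | zero => simp
  | tmul a b => simp [E2]
  | add x y hx hy => simp [map_add, hx, hy]

variable (J L : H ⊗[k] H) [Invertible L]

lemma twistedComul_apply (x : H) :
    twistedComul k H J L x = ⅟L * Coalgebra.comul (R := k) x * J := by
  simp [twistedComul, mul_assoc]

lemma rTensor_twisted (u : H ⊗[k] H) :
    LinearMap.rTensor H (twistedComul k H J L) u =
      ((⅟L) ⊗ₜ[k] (1 : H)) * D1 k H u * (J ⊗ₜ[k] (1 : H)) := by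
  induction u using TensorProduct.induction_on with
  | zero => simp
  | tmul a b =>
      simp [D1, Algebra.TensorProduct.tmul_mul_tmul, twistedComul_apply]
  | add x y hx hy => simp [map_add, hx, hy, mul_add, add_mul]

lemma lTensor_twisted (u : H ⊗[k] H) :
    LinearMap.lTensor H (twistedComul k H J L) u =
      ((1 : H) ⊗ₜ[k] (⅟L)) * D2 k H u * ((1 : H) ⊗ₜ[k] J) := by
  induction u using TensorProduct.induction_on with
  | zero => simp
  | tmul a b =>
      simp [D2, Algebra.TensorProduct.tmul_mul_tmul, twistedComul_apply]
  | add x y hx hy => simp [map_add, hx, hy, mul_add, add_mul]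

lemma coassoc_twisted (hJ : IsTwoCocycle k H J) (hL : IsTwoCocycle k H L) (x : H) :
    TensorProduct.assoc k H H H
      (LinearMap.rTensor H (twistedComul k H J L) (twistedComul k H J L x)) =
    LinearMap.lTensor H (twistedComul k H J L) (twistedComul k H J L x) := by
  unfold IsTwoCocycle at hJ hL
  set α := Algebra.TensorProduct.assoc k k k H H H
  have hαa : ∀ v : (H ⊗[k] H) ⊗[k] H, α v = TensorProduct.assoc k H H H v := fun _ => rfl
  -- cocycle for J, rephrased
  have hJ' : α (D1 k H J * (J ⊗ₜ[k] (1 : H))) =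
      D2 k H J * ((1 : H) ⊗ₜ[k] J) := by
    rw [map_mul, hαa, hαa, D1_apply, D2_apply, ← hJ]
  -- cocycle for L, inverted
  have hL' : α (((⅟L) ⊗ₜ[k] (1 : H)) * D1 k H (⅟L)) =
      ((1 : H) ⊗ₜ[k] (⅟L)) * D2 k H (⅟L) := by
    have hP : α (D1 k H L * (L ⊗ₜ[k] (1 : H))) = D2 k H L * ((1 : H) ⊗ₜ[k] L) := by
      rw [map_mul, hαa, hαa, D1_apply, D2_apply, ← hL]
    have h1 : α (((⅟L) ⊗ₜ[k] (1 : H)) * D1 k H (⅟L)) *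
        α (D1 k H L * (L ⊗ₜ[k] (1 : H))) = 1 := by
      rw [← map_mul]
      have : ((⅟L) ⊗ₜ[k] (1 : H)) * D1 k H (⅟L) * (D1 k H L * (L ⊗ₜ[k] (1 : H))) =
          (1 : (H ⊗[k] H) ⊗[k] H) := by
        have : D1 k H (⅟L) * D1 k H L = 1 := by rw [← map_mul, invOf_mul_self, map_one]
        calc ((⅟L) ⊗ₜ[k] (1 : H)) * D1 k H (⅟L) * (D1 k H L * (L ⊗ₜ[k] (1 : H)))
            = ((⅟L) ⊗ₜ[k] (1 : H)) * (D1 k H (⅟L) * D1 k H L) * (L ⊗ₜ[k] (1 : H)) := by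
              simp only [mul_assoc]
          _ = ((⅟L) ⊗ₜ[k] (1 : H)) * (L ⊗ₜ[k] (1 : H)) := by rw [this, mul_one]
          _ = 1 := by
              rw [Algebra.TensorProduct.tmul_mul_tmul, invOf_mul_self, one_mul]
              exact Algebra.TensorProduct.one_def.symm
      rw [this, map_one]
    have h2 : α (D1 k H L * (L ⊗ₜ[k] (1 : H))) *
        (((1 : H) ⊗ₜ[k] (⅟L)) * D2 k H (⅟L)) = 1 := by
      rw [hP]
      have : D2 k H L * (((1 : H) ⊗ₜ[k] L) * (((1 : H) ⊗ₜ[k] (⅟L)) * D2 k H (⅟L))) = 1 := by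
        rw [← mul_assoc ((1 : H) ⊗ₜ[k] L), Algebra.TensorProduct.tmul_mul_tmul, one_mul,
          mul_invOf_self, ← Algebra.TensorProduct.one_def, one_mul, ← map_mul,
          mul_invOf_self, map_one]
      rw [mul_assoc]; exact this
    calc α (((⅟L) ⊗ₜ[k] (1 : H)) * D1 k H (⅟L))
        = α (((⅟L) ⊗ₜ[k] (1 : H)) * D1 k H (⅟L)) *
            (α (D1 k H L * (L ⊗ₜ[k] (1 : H))) *
              (((1 : H) ⊗ₜ[k] (⅟L)) * D2 k H (⅟L))) := by rw [h2, mul_one]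
      _ = ((1 : H) ⊗ₜ[k] (⅟L)) * D2 k H (⅟L) := by rw [← mul_assoc, h1, one_mul]
  -- coassociativity of Δ
  have hco : α (D1 k H (Coalgebra.comul (R := k) x)) =
      D2 k H (Coalgebra.comul (R := k) x) := by
    rw [hαa, D1_apply, D2_apply]
    exact Coalgebra.coassoc_apply x
  rw [← hαa, rTensor_twisted, lTensor_twisted, twistedComul_apply]
  simp only [map_mul]
  calc α ((⅟L) ⊗ₜ[k] (1:H)) * (α (D1 k H (⅟L)) * α (D1 k H (Coalgebra.comul (R := k) x)) *
        α (D1 k H J)) * α (J ⊗ₜ[k] (1:H))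
      = (α ((⅟L) ⊗ₜ[k] (1:H)) * α (D1 k H (⅟L))) * α (D1 k H (Coalgebra.comul (R := k) x)) *
        (α (D1 k H J) * α (J ⊗ₜ[k] (1:H))) := by
        simp only [mul_assoc]
    _ = (((1:H) ⊗ₜ[k] (⅟L)) * D2 k H (⅟L)) * D2 k H (Coalgebra.comul (R := k) x) *
        (D2 k H J * ((1:H) ⊗ₜ[k] J)) := by
        rw [← map_mul α ((⅟L) ⊗ₜ[k] (1:H)) (D1 k H (⅟L)),
          ← map_mul α (D1 k H J) (J ⊗ₜ[k] (1:H)), hL', hJ', hco]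
    _ = ((1:H) ⊗ₜ[k] (⅟L)) * (D2 k H (⅟L) * D2 k H (Coalgebra.comul (R := k) x) * D2 k H J) *
        ((1:H) ⊗ₜ[k] J) := by
        simp only [mul_assoc]

lemma E1_twisted (hJn : IsNormalized k H J) (hLn : IsNormalized k H L) (x : H) :
    E1 k H (twistedComul k H J L x) = x := by
  have hL1 : E1 k H L = 1 := by rw [E1_apply]; exact hLn.1
  have hJ1 : E1 k H J = 1 := by rw [E1_apply]; exact hJn.1
  have hLi : E1 k H (⅟L) = 1 := by
    have := map_mul (E1 k H) (⅟L) L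
    rw [invOf_mul_self, map_one, hL1, mul_one] at this
    exact this.symm
  have hcom : E1 k H (Coalgebra.comul (R := k) x) = x := by
    rw [E1_apply]
    rw [← LinearMap.comp_apply, Coalgebra.rTensor_counit_comp_comul]
    simp
  rw [twistedComul_apply, map_mul, map_mul, hLi, hJ1, hcom, one_mul, mul_one]

lemma E2_twisted (hJn : IsNormalized k H J) (hLn : IsNormalized k H L) (x : H) :
    E2 k H (twistedComul k H J L x) = x := by
  have hL1 : E2 k H L = 1 := by rw [E2_apply]; exact hLn.2
  have hJ1 : E2 k H J = 1 := by rw [E2_apply]; exact hJn.2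
  have hLi : E2 k H (⅟L) = 1 := by
    have := map_mul (E2 k H) (⅟L) L
    rw [invOf_mul_self, map_one, hL1, mul_one] at this
    exact this.symm
  have hcom : E2 k H (Coalgebra.comul (R := k) x) = x := by
    rw [E2_apply]
    rw [← LinearMap.comp_apply, Coalgebra.lTensor_counit_comp_comul]
    simp
  rw [twistedComul_apply, map_mul, map_mul, hLi, hJ1, hcom, one_mul, mul_one]

end Stmt14Aux

open Stmt14Aux in
/-- Statement 14: for invertible normalized 2-cocycles `J` and `L`, the twisted product on
`H*` is associative and has the counit `ε` as a two-sided unit; hence it makes `H*` an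
associative unital `k`-algebra. -/
theorem stmt14 (J L : H ⊗[k] H) [Invertible J] [Invertible L]
    (hJ : IsTwoCocycle k H J) (hL : IsTwoCocycle k H L)
    (hJn : IsNormalized k H J) (hLn : IsNormalized k H L) :
    (∀ f g h : Module.Dual k H,
      twistedDualMul k H J L (twistedDualMul k H J L f g) h =
        twistedDualMul k H J L f (twistedDualMul k H J L g h)) ∧
    (∀ f : Module.Dual k H,
      twistedDualMul k H J L (Coalgebra.counit (R := k) (A := H)) f = f ∧
      twistedDualMul k H J L f (Coalgebra.counit (R := k) (A := H)) = f) := by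
  have mul_apply : ∀ (f g : Module.Dual k H) (x : H),
      twistedDualMul k H J L f g x =
        TensorProduct.lid k k (TensorProduct.map g f (twistedComul k H J L x)) := by
    intro f g x; rfl
  constructor
  · intro f g h
    ext x
    set Δ' := twistedComul k H J L with hΔ'
    -- the two ternary pairings
    set T : H ⊗[k] (H ⊗[k] H) →ₗ[k] k :=
      (TensorProduct.lid k k).toLinearMap ∘ₗ
        TensorProduct.map h ((TensorProduct.lid k k).toLinearMap ∘ₗ TensorProduct.map g f)
      with hT
    set S : (H ⊗[k] H) ⊗[k] H →ₗ[k] k :=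
      (TensorProduct.lid k k).toLinearMap ∘ₗ
        TensorProduct.map ((TensorProduct.lid k k).toLinearMap ∘ₗ TensorProduct.map h g) f
      with hS
    have claimA : ∀ u : H ⊗[k] H,
        TensorProduct.lid k k (TensorProduct.map h (twistedDualMul k H J L f g) u) =
          T (LinearMap.lTensor H Δ' u) := by
      intro u
      induction u using TensorProduct.induction_on with
      | zero => simp
      | tmul a b => simp [hT, mul_apply, smul_eq_mul]
      | add x y hx hy => simp only [map_add, hx, hy]
    have claimB : ∀ u : H ⊗[k] H,
        TensorProduct.lid k k (TensorProduct.map (twistedDualMul k H J L g h) f u) =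
          S (LinearMap.rTensor H Δ' u) := by
      intro u
      induction u using TensorProduct.induction_on with
      | zero => simp
      | tmul a b => simp [hS, mul_apply, smul_eq_mul]
      | add x y hx hy => simp only [map_add, hx, hy]
    have claimC : T ∘ₗ (TensorProduct.assoc k H H H).toLinearMap = S := by
      apply TensorProduct.ext_threefold
      intro a b c
      simp [hT, hS, smul_eq_mul, mul_assoc]
    calc twistedDualMul k H J L (twistedDualMul k H J L f g) h x
        = TensorProduct.lid k k
            (TensorProduct.map h (twistedDualMul k H J L f g) (Δ' x)) := mul_apply _ _ _
      _ = T (LinearMap.lTensor H Δ' (Δ' x)) := claimA (Δ' x)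
      _ = T (TensorProduct.assoc k H H H (LinearMap.rTensor H Δ' (Δ' x))) := by
            have hco : TensorProduct.assoc k H H H
                (LinearMap.rTensor H Δ' (Δ' x)) = LinearMap.lTensor H Δ' (Δ' x) :=
              coassoc_twisted k H J L hJ hL x
            rw [hco]
      _ = S (LinearMap.rTensor H Δ' (Δ' x)) := LinearMap.congr_fun claimC _
      _ = TensorProduct.lid k k
            (TensorProduct.map (twistedDualMul k H J L g h) f (Δ' x)) := (claimB (Δ' x)).symm
      _ = twistedDualMul k H J L f (twistedDualMul k H J L g h) x := (mul_apply _ _ _).symm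
  · intro f
    constructor
    · -- ε ⋆ f = f : uses id ⊗ ε
      ext x
      have key : ∀ u : H ⊗[k] H,
          TensorProduct.lid k k
            (TensorProduct.map f (Coalgebra.counit (R := k) (A := H)) u) = f (E2 k H u) := by
        intro u
        induction u using TensorProduct.induction_on with
        | zero => simp
        | tmul a b => simp [E2_apply, smul_eq_mul, mul_comm]
        | add x y hx hy => simp only [map_add, hx, hy]
      rw [mul_apply, key, E2_twisted k H J L hJn hLn]
    · -- f ⋆ ε = f : uses ε ⊗ id
      ext x
      have key : ∀ u : H ⊗[k] H,
          TensorProduct.lid k k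
            (TensorProduct.map (Coalgebra.counit (R := k) (A := H)) f u) = f (E1 k H u) := by
        intro u
        induction u using TensorProduct.induction_on with
        | zero => simp
        | tmul a b => simp [E1_apply, smul_eq_mul]
        | add x y hx hy => simp only [map_add, hx, hy]
      rw [mul_apply, key, E1_twisted k H J L hJn hLn]
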